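/- In the pure braid group P_n with generators A_{i,j}, define t_i := A_{1,i} A_{2,i} ⋯ A_{i-1,i}, A_{0,i} := (A_{1,i} ⋯ A_{n,i})⁻¹, and Ã_{0,i} := A_{0,i} · t_i². Then the product Ã_{0,1} Ã_{0,2} ⋯ Ã_{0,n} equals the identity in P_n. -/

import Mathlib

open scoped commutatorElement

/-- Artin's braid relations on `k` generators `σ_1, …, σ_k` (0-indexed internally):
far commutation and the braid relation. -/
def braidRels (k : ℕ) : Set (FreeGroup (Fin k)) :=
  { r | (∃ i j : Fin k, (i : ℕ) + 2 ≤ (j : ℕ) ∧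
          r = ⁅FreeGroup.of i, FreeGroup.of j⁆) ∨
        (∃ i j : Fin k, (j : ℕ) = (i : ℕ) + 1 ∧
          r = FreeGroup.of i * FreeGroup.of j * FreeGroup.of i *
              (FreeGroup.of j * FreeGroup.of i * FreeGroup.of j)⁻¹) }

/-- The braid group on `n` strands, given by the Artin presentation. -/
abbrev BraidGroup (n : ℕ) : Type := PresentedGroup (braidRels (n - 1))

/-- The Artin generator `σ_i` (1-based, `1 ≤ i ≤ n-1`) of `BraidGroup n`. -/
def braidSigma (n i : ℕ) : BraidGroup n :=
  if h : 1 ≤ i ∧ i - 1 < n - 1 then PresentedGroup.of ⟨i - 1, h.2⟩ else 1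

/-- The standard pure braid generator `A_{i,j}` for `1 ≤ i < j ≤ n`:
`A_{i,j} = (σ_{j-1} ⋯ σ_{i+1}) σ_i² (σ_{j-1} ⋯ σ_{i+1})⁻¹`. -/
def braidAgen (n i j : ℕ) : BraidGroup n :=
  (((List.range' (i + 1) (j - 1 - i)).map (braidSigma n)).reverse).prod *
    (braidSigma n i) ^ 2 *
    ((((List.range' (i + 1) (j - 1 - i)).map (braidSigma n)).reverse).prod)⁻¹

/-- `A_{i,j}` with the symmetry convention `A_{j,i} = A_{i,j}` and `A_{i,i} = 1`. -/
def braidA (n i j : ℕ) : BraidGroup n :=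
  if i < j then braidAgen n i j else if j < i then braidAgen n j i else 1

/-- `A_{0,i} := (A_{1,i} A_{2,i} ⋯ A_{n,i})⁻¹`. -/
def braidA0 (n i : ℕ) : BraidGroup n :=
  (((List.range' 1 n).map fun k => braidA n k i).prod)⁻¹

/-- The full twist `z_n = ∏_{j=2}^{n} (A_{1,j} A_{2,j} ⋯ A_{j-1,j})`. -/
def fullTwist (n : ℕ) : BraidGroup n :=
  ((List.range' 1 n).map fun j =>
    ((List.range' 1 (j - 1)).map fun i => braidA n i j).prod).prod

/-- The pure braid group `P_n`, as the subgroup of `BraidGroup n` generated by the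
elements `A_{i,j}`, `1 ≤ i < j ≤ n`. -/
def PureBraid (n : ℕ) : Subgroup (BraidGroup n) :=
  Subgroup.closure { g | ∃ i j : ℕ, 1 ≤ i ∧ i < j ∧ j ≤ n ∧ g = braidA n i j }

/-- `t_i := A_{1,i} A_{2,i} ⋯ A_{i-1,i}`. -/
def braidT (n i : ℕ) : BraidGroup n :=
  ((List.range' 1 (i - 1)).map fun k => braidA n k i).prod

/-- `Ã_{0,i} := A_{0,i} · t_i²`. -/
def braidA0tilde (n i : ℕ) : BraidGroup n :=
  braidA0 n i * (braidT n i) ^ 2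

namespace BraidAux

open List

lemma rel_one {α} {rels : Set (FreeGroup α)} {r : FreeGroup α} (h : r ∈ rels) :
    (QuotientGroup.mk r : PresentedGroup rels) = 1 :=
  (QuotientGroup.eq_one_iff r).mpr (Subgroup.subset_normalClosure h)

lemma sigma_eq_one {n i : ℕ} (h : ¬ (1 ≤ i ∧ i - 1 < n - 1)) : braidSigma n i = 1 := by
  simp only [braidSigma, dif_neg h]

lemma sigma_eq_of {n i : ℕ} (h1 : 1 ≤ i) (h2 : i - 1 < n - 1) :
    braidSigma n i = PresentedGroup.of ⟨i - 1, h2⟩ := by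
  simp only [braidSigma, dif_pos (And.intro h1 h2)]

lemma braid_comm {n : ℕ} {i j : ℕ} (h1 : 1 ≤ i) (h : i + 2 ≤ j) :
    Commute (braidSigma n i) (braidSigma n j) := by
  by_cases hj : j - 1 < n - 1
  · have hi : i - 1 < n - 1 := by omega
    have hij : (i - 1) + 2 ≤ j - 1 := by omega
    have hrel : (⁅FreeGroup.of (⟨i-1, hi⟩ : Fin (n-1)), FreeGroup.of ⟨j-1, hj⟩⁆ :
        FreeGroup (Fin (n-1))) ∈ braidRels (n-1) := by
      left; exact ⟨⟨i-1, hi⟩, ⟨j-1, hj⟩, hij, rfl⟩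
    have h1' := rel_one hrel
    rw [sigma_eq_of h1 hi, sigma_eq_of (by omega) hj]
    set x : PresentedGroup (braidRels (n-1)) := PresentedGroup.of ⟨i-1, hi⟩ with hx
    set y : PresentedGroup (braidRels (n-1)) := PresentedGroup.of ⟨j-1, hj⟩ with hy
    have key : x * y * x⁻¹ * y⁻¹ = 1 := by exact h1'
    have h2' : x * y * x⁻¹ = y := by
      have := mul_inv_eq_one.mp key; simpa using this
    show x * y = y * x
    calc x * y = (x * y * x⁻¹) * x := by group
    _ = y * x := by rw [h2']
  · rw [sigma_eq_one (n := n) (i := j) (by omega)]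
    exact Commute.one_right _

lemma braid_rel {n : ℕ} {i : ℕ} (h1 : 1 ≤ i) (h2 : i + 2 ≤ n) :
    braidSigma n i * braidSigma n (i+1) * braidSigma n i
      = braidSigma n (i+1) * braidSigma n i * braidSigma n (i+1) := by
  have hi : i - 1 < n - 1 := by omega
  have hj : (i+1) - 1 < n - 1 := by omega
  have hrel : (FreeGroup.of (⟨i-1, hi⟩ : Fin (n-1)) * FreeGroup.of ⟨(i+1)-1, hj⟩ *
      FreeGroup.of ⟨i-1, hi⟩ *
      (FreeGroup.of (⟨(i+1)-1, hj⟩ : Fin (n-1)) * FreeGroup.of ⟨i-1, hi⟩ *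
        FreeGroup.of ⟨(i+1)-1, hj⟩)⁻¹) ∈ braidRels (n-1) := by
    right; exact ⟨⟨i-1, hi⟩, ⟨(i+1)-1, hj⟩, by simp; omega, rfl⟩
  have h1' := rel_one hrel
  rw [sigma_eq_of h1 hi, sigma_eq_of (by omega) hj]
  have : (PresentedGroup.of (⟨i-1, hi⟩ : Fin (n-1)) * PresentedGroup.of ⟨(i+1)-1, hj⟩ *
      PresentedGroup.of ⟨i-1, hi⟩ *
      (PresentedGroup.of (⟨(i+1)-1, hj⟩ : Fin (n-1)) * PresentedGroup.of ⟨i-1, hi⟩ *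
        PresentedGroup.of ⟨(i+1)-1, hj⟩)⁻¹ : PresentedGroup (braidRels (n-1))) = 1 := by
    exact h1'
  exact mul_inv_eq_one.mp this

/-- ascending chain `σ_a σ_{a+1} ⋯ σ_{a+l-1}` -/
def chU (n a l : ℕ) : BraidGroup n := ((List.range' a l).map (braidSigma n)).prod

/-- descending chain `σ_{a+l-1} ⋯ σ_{a+1} σ_a` -/
def chD (n a l : ℕ) : BraidGroup n := (((List.range' a l).map (braidSigma n)).reverse).prod

lemma chU_zero (n a : ℕ) : chU n a 0 = 1 := rfl
lemma chD_zero (n a : ℕ) : chD n a 0 = 1 := rfl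

lemma chU_succ_front (n a l : ℕ) : chU n a (l+1) = braidSigma n a * chU n (a+1) l := by
  simp [chU, List.range'_succ]

lemma chU_succ_back (n a l : ℕ) : chU n a (l+1) = chU n a l * braidSigma n (a+l) := by
  simp [chU, List.range'_concat]

lemma chD_succ_front (n a l : ℕ) : chD n a (l+1) = chD n (a+1) l * braidSigma n a := by
  simp [chD, List.range'_succ]

lemma chD_succ_back (n a l : ℕ) : chD n a (l+1) = braidSigma n (a+l) * chD n a l := by
  simp [chD, List.range'_concat]

lemma commute_chU {n : ℕ} (g : BraidGroup n) (a l : ℕ)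
    (h : ∀ m, a ≤ m → m < a + l → Commute g (braidSigma n m)) : Commute g (chU n a l) := by
  apply Commute.list_prod_right
  intro x hx
  obtain ⟨m, hm, rfl⟩ := List.mem_map.mp hx
  obtain ⟨h1, h2⟩ := List.mem_range'_1.mp hm
  exact h m h1 h2

lemma commute_chD {n : ℕ} (g : BraidGroup n) (a l : ℕ)
    (h : ∀ m, a ≤ m → m < a + l → Commute g (braidSigma n m)) : Commute g (chD n a l) := by
  apply Commute.list_prod_right
  intro x hx
  rw [List.mem_reverse] at hx
  obtain ⟨m, hm, rfl⟩ := List.mem_map.mp hx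
  obtain ⟨h1, h2⟩ := List.mem_range'_1.mp hm
  exact h m h1 h2

/-- far commutation of a single generator with a chain -/
lemma commute_far_chU {n : ℕ} (m a l : ℕ) (hm : 1 ≤ m) (ha : 1 ≤ a)
    (h : m + 2 ≤ a ∨ a + l + 1 ≤ m) : Commute (braidSigma n m) (chU n a l) := by
  apply commute_chU
  intro c hc1 hc2
  rcases h with h | h
  · exact braid_comm hm (by omega)
  · exact (braid_comm (by omega) (by omega)).symm

lemma commute_far_chD {n : ℕ} (m a l : ℕ) (hm : 1 ≤ m) (ha : 1 ≤ a)
    (h : m + 2 ≤ a ∨ a + l + 1 ≤ m) : Commute (braidSigma n m) (chD n a l) := by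
  apply commute_chD
  intro c hc1 hc2
  rcases h with h | h
  · exact braid_comm hm (by omega)
  · exact (braid_comm (by omega) (by omega)).symm

/-- shift across a descending chain: `σ_j ⋅ (σ_{a+l-1}⋯σ_a) = (σ_{a+l-1}⋯σ_a) ⋅ σ_{j+1}`
for `a ≤ j ≤ a+l-2`. -/
lemma shift_chD {n : ℕ} : ∀ l j a, 1 ≤ a → a ≤ j → j + 2 ≤ a + l → a + l ≤ n →
    braidSigma n j * chD n a l = chD n a l * braidSigma n (j+1) := by
  intro l
  induction l with
  | zero => intro j a _ _ h _; omega
  | succ l ih =>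
    intro j a ha haj hj hn
    by_cases hcase : j + 2 ≤ a + l
    · rw [chD_succ_back]
      have hfar : Commute (braidSigma n j) (braidSigma n (a+l)) :=
        braid_comm (by omega) (by omega)
      rw [← mul_assoc, hfar.eq, mul_assoc, ih j a ha haj hcase (by omega), ← mul_assoc]
    · -- j = a + l - 1, so l ≥ 1
      have hj' : j = a + l - 1 := by omega
      have hl : 1 ≤ l := by omega
      obtain ⟨l', rfl⟩ : ∃ l', l = l' + 1 := ⟨l - 1, by omega⟩
      have hjeq : j = a + l' := by omega
      subst hjeq
      rw [chD_succ_back, chD_succ_back]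
      have hbr : braidSigma n (a+l') * braidSigma n (a+l'+1) * braidSigma n (a+l') =
          braidSigma n (a+l'+1) * braidSigma n (a+l') * braidSigma n (a+l'+1) :=
        braid_rel (by omega) (by omega)
      have hfar : Commute (braidSigma n (a+l'+1)) (chD n a l') :=
        commute_far_chD _ _ _ (by omega) (by omega) (by omega)
      calc braidSigma n (a+l') * (braidSigma n (a+l'+1) * (braidSigma n (a+l') * chD n a l'))
          = (braidSigma n (a+l') * braidSigma n (a+l'+1) * braidSigma n (a+l')) * chD n a l' := by
            group
        _ = (braidSigma n (a+l'+1) * braidSigma n (a+l') * braidSigma n (a+l'+1)) * chD n a l' := by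
            rw [hbr]
        _ = braidSigma n (a+l'+1) * (braidSigma n (a+l') * chD n a l') * braidSigma n (a+l'+1) := by
            rw [mul_assoc, mul_assoc, hfar.eq]; group

/-- shift across an ascending chain: `σ_{j+1} ⋅ (σ_a⋯σ_{a+l-1}) = (σ_a⋯σ_{a+l-1}) ⋅ σ_j`
for `a ≤ j ≤ a+l-2`. -/
lemma shift_chU {n : ℕ} : ∀ l j a, 1 ≤ a → a ≤ j → j + 2 ≤ a + l → a + l ≤ n →
    braidSigma n (j+1) * chU n a l = chU n a l * braidSigma n j := by
  intro l
  induction l with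
  | zero => intro j a _ _ h _; omega
  | succ l ih =>
    intro j a ha haj hj hn
    by_cases hcase : a + 1 ≤ j
    · rw [chU_succ_front]
      have hfar : Commute (braidSigma n (j+1)) (braidSigma n a) :=
        (braid_comm ha (by omega)).symm
      rw [← mul_assoc, hfar.eq, mul_assoc, ih j (a+1) (by omega) hcase (by omega) (by omega),
        ← mul_assoc]
    · have hjeq : j = a := by omega
      subst hjeq
      have hl : 2 ≤ l + 1 := by omega
      obtain ⟨l', rfl⟩ : ∃ l', l = l' + 1 := ⟨l - 1, by omega⟩
      rw [chU_succ_front, chU_succ_front]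
      have hbr : braidSigma n j * braidSigma n (j+1) * braidSigma n j =
          braidSigma n (j+1) * braidSigma n j * braidSigma n (j+1) :=
        braid_rel (by omega) (by omega)
      have hfar : Commute (braidSigma n j) (chU n (j+1+1) l') :=
        commute_far_chU _ _ _ (by omega) (by omega) (by omega)
      calc braidSigma n (j+1) * (braidSigma n j * (braidSigma n (j+1) * chU n (j+1+1) l'))
          = (braidSigma n (j+1) * braidSigma n j * braidSigma n (j+1)) * chU n (j+1+1) l' := by
            group
        _ = (braidSigma n j * braidSigma n (j+1) * braidSigma n j) * chU n (j+1+1) l' := by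
            rw [hbr]
        _ = braidSigma n j * (braidSigma n (j+1) * chU n (j+1+1) l') * braidSigma n j := by
            rw [mul_assoc, mul_assoc, hfar.eq]; group

lemma conj_comm_sandwich {G : Type*} [Group G] {a c : G} (Y : G) (h : Commute a c) :
    a * (c⁻¹ * Y * c) * a⁻¹ = c⁻¹ * (a * Y * a⁻¹) * c := by
  have h1 : a * c⁻¹ = c⁻¹ * a := h.inv_right.eq
  calc a * (c⁻¹ * Y * c) * a⁻¹ = (a * c⁻¹) * Y * (c * a⁻¹) := by group
  _ = (c⁻¹ * a) * Y * (c * a⁻¹) := by rw [h1]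
  _ = (c⁻¹ * a) * Y * (a⁻¹ * c) := by rw [← h.inv_left.eq]
  _ = c⁻¹ * (a * Y * a⁻¹) * c := by group

/-- `σ_{j+1} σ_j² σ_{j+1}⁻¹ = σ_j⁻¹ σ_{j+1}² σ_j` -/
lemma braid_sq {n : ℕ} {j : ℕ} (h1 : 1 ≤ j) (h2 : j + 2 ≤ n) :
    braidSigma n (j+1) * (braidSigma n j)^2 * (braidSigma n (j+1))⁻¹
      = (braidSigma n j)⁻¹ * (braidSigma n (j+1))^2 * braidSigma n j := by
  have hbr := braid_rel (n := n) h1 h2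
  set x := braidSigma n j
  set y := braidSigma n (j+1)
  calc y * x^2 * y⁻¹ = x⁻¹ * (x*y*x) * (x*y⁻¹) := by rw [pow_two]; group
  _ = x⁻¹ * (y*x*y) * (x*y⁻¹) := by rw [hbr]
  _ = x⁻¹ * y * (x*y*x) * y⁻¹ := by group
  _ = x⁻¹ * y * (y*x*y) * y⁻¹ := by rw [hbr]
  _ = x⁻¹ * y^2 * x := by rw [pow_two]; group

/-- the key alternative expression:
`(σ_{a+l}⋯σ_{a+1}) σ_a² (σ_{a+l}⋯σ_{a+1})⁻¹ = (σ_{a+l-1}⋯σ_a)⁻¹ σ_{a+l}² (σ_{a+l-1}⋯σ_a)` -/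
lemma conj_alt {n : ℕ} : ∀ l a, 1 ≤ a → a + l + 1 ≤ n →
    chD n (a+1) l * (braidSigma n a)^2 * (chD n (a+1) l)⁻¹
      = (chD n a l)⁻¹ * (braidSigma n (a+l))^2 * chD n a l := by
  intro l
  induction l with
  | zero => intro a _ _; simp [chD_zero]
  | succ l ih =>
    intro a ha hn
    have ihl := ih a ha (by omega)
    have hfar : Commute (braidSigma n (a+l+1)) (chD n a l) :=
      commute_far_chD _ _ _ (by omega) ha (by omega)
    calc chD n (a+1) (l+1) * (braidSigma n a)^2 * (chD n (a+1) (l+1))⁻¹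
        = braidSigma n (a+l+1) * (chD n (a+1) l * (braidSigma n a)^2 * (chD n (a+1) l)⁻¹) *
            (braidSigma n (a+l+1))⁻¹ := by
          rw [chD_succ_back, show (a+1)+l = a+l+1 from by ring, pow_two]; group
      _ = braidSigma n (a+l+1) * ((chD n a l)⁻¹ * (braidSigma n (a+l))^2 * chD n a l) *
            (braidSigma n (a+l+1))⁻¹ := by rw [ihl]
      _ = (chD n a l)⁻¹ * (braidSigma n (a+l+1) * (braidSigma n (a+l))^2 *
            (braidSigma n (a+l+1))⁻¹) * chD n a l := conj_comm_sandwich _ hfar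
      _ = (chD n a l)⁻¹ * ((braidSigma n (a+l))⁻¹ * (braidSigma n (a+l+1))^2 *
            braidSigma n (a+l)) * chD n a l := by rw [braid_sq (by omega) (by omega)]
      _ = (braidSigma n (a+l) * chD n a l)⁻¹ * (braidSigma n (a+l+1))^2 *
            (braidSigma n (a+l) * chD n a l) := by rw [pow_two]; group
      _ = (chD n a (l+1))⁻¹ * (braidSigma n (a+(l+1)))^2 * chD n a (l+1) := by
          rw [chD_succ_back, show a+(l+1) = a+l+1 from by ring]

lemma braidAgen_eq (n i j : ℕ) :
    braidAgen n i j = chD n (i+1) (j-1-i) * (braidSigma n i)^2 * (chD n (i+1) (j-1-i))⁻¹ :=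
  rfl

/-- `A_{k,m}` commutes with `σ_j` for `k+1 ≤ j ≤ m-2`. -/
lemma commute_sigma_Agen {n k m j : ℕ} (hk : 1 ≤ k) (hj1 : k + 1 ≤ j) (hj2 : j + 2 ≤ m)
    (hm : m ≤ n) : Commute (braidSigma n j) (braidAgen n k m) := by
  obtain ⟨l, rfl⟩ : ∃ l, m = k + 1 + l := ⟨m - 1 - k, by omega⟩
  rw [braidAgen_eq]
  have hsub : k + 1 + l - 1 - k = l := by omega
  rw [hsub]
  have hsh : braidSigma n j * chD n (k+1) l = chD n (k+1) l * braidSigma n (j+1) :=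
    shift_chD l j (k+1) (by omega) hj1 (by omega) (by omega)
  have hfar : Commute (braidSigma n (j+1)) ((braidSigma n k)^2) := by
    rw [pow_two]
    exact ((braid_comm hk (by omega)).symm).mul_right ((braid_comm hk (by omega)).symm)
  show braidSigma n j * _ = _ * braidSigma n j
  calc braidSigma n j * (chD n (k+1) l * (braidSigma n k)^2 * (chD n (k+1) l)⁻¹)
      = (braidSigma n j * chD n (k+1) l) * (braidSigma n k)^2 * (chD n (k+1) l)⁻¹ := by
        group
    _ = chD n (k+1) l * (braidSigma n (j+1) * (braidSigma n k)^2) *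
          (chD n (k+1) l)⁻¹ := by rw [hsh]; group
    _ = chD n (k+1) l * (braidSigma n k)^2 * (braidSigma n (j+1) *
          (chD n (k+1) l)⁻¹) := by rw [hfar.eq]; group
    _ = chD n (k+1) l * (braidSigma n k)^2 * ((chD n (k+1) l)⁻¹ * braidSigma n j) := by
        have : braidSigma n (j+1) * (chD n (k+1) l)⁻¹
            = (chD n (k+1) l)⁻¹ * braidSigma n j := by
          rw [eq_comm, inv_mul_eq_iff_eq_mul, ← mul_assoc, ← hsh]; group
        rw [this]
    _ = chD n (k+1) l * (braidSigma n k)^2 * (chD n (k+1) l)⁻¹ * braidSigma n j := by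
        group

/-- closed form for partial products of `t_j`:
`A_{a,j} A_{a+1,j} ⋯ A_{j-1,j} = (σ_{j-1}⋯σ_a)(σ_a⋯σ_{j-1})`. -/
lemma tpart (n : ℕ) : ∀ l a j, a + l = j →
    ((List.range' a l).map (fun k => braidA n k j)).prod = chD n a l * chU n a l := by
  intro l
  induction l with
  | zero => intro a j _; simp [chD_zero, chU_zero]
  | succ l ih =>
    intro a j hj
    rw [List.range'_succ]
    have haj : a < j := by omega
    have hAa : braidA n a j = braidAgen n a j := if_pos haj
    have hsub : j - 1 - a = l := by omega
    simp only [List.map_cons, List.prod_cons]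
    rw [ih (a+1) j (by omega), hAa, braidAgen_eq, hsub]
    rw [chD_succ_front, chU_succ_front, pow_two]
    group

lemma braidT_eq (n j : ℕ) (hj : 1 ≤ j) : braidT n j = chD n 1 (j-1) * chU n 1 (j-1) := by
  unfold braidT
  exact tpart n (j-1) 1 j (by omega)

/-- `t_j` commutes with `σ_m` for `1 ≤ m ≤ j-2`. -/
lemma commute_sigma_T {n j m : ℕ} (hm : 1 ≤ m) (hmj : m + 2 ≤ j) (hjn : j ≤ n) :
    Commute (braidSigma n m) (braidT n j) := by
  rw [braidT_eq n j (by omega)]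
  have h1 : braidSigma n m * chD n 1 (j-1) = chD n 1 (j-1) * braidSigma n (m+1) :=
    shift_chD _ _ _ le_rfl hm (by omega) (by omega)
  have h2 : braidSigma n (m+1) * chU n 1 (j-1) = chU n 1 (j-1) * braidSigma n m :=
    shift_chU _ _ _ le_rfl hm (by omega) (by omega)
  show braidSigma n m * _ = _ * braidSigma n m
  calc braidSigma n m * (chD n 1 (j-1) * chU n 1 (j-1))
      = (braidSigma n m * chD n 1 (j-1)) * chU n 1 (j-1) := by group
    _ = chD n 1 (j-1) * (braidSigma n (m+1) * chU n 1 (j-1)) := by rw [h1]; group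
    _ = chD n 1 (j-1) * chU n 1 (j-1) * braidSigma n m := by rw [h2]; group

/-- the partial product `A_{k,k+1} A_{k,k+2} ⋯ A_{k,k+l}` -/
def dpr (n k l : ℕ) : BraidGroup n := ((List.range' (k+1) l).map (fun m => braidA n k m)).prod

lemma dpr_succ (n k l : ℕ) : dpr n k (l+1) = dpr n k l * braidA n k (k+1+l) := by
  simp [dpr, List.range'_concat]

/-- closed form `d = (σ_k⋯σ_{k+l-1})(σ_{k+l-1}⋯σ_k)` -/
lemma dpr_eq (n : ℕ) : ∀ l k, 1 ≤ k → k + l ≤ n →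
    dpr n k l = chU n k l * chD n k l := by
  intro l
  induction l with
  | zero => intro k _ _; simp [dpr, chD_zero, chU_zero]
  | succ l ih =>
    intro k hk hn
    rw [dpr_succ, ih k hk (by omega)]
    have hA : braidA n k (k+1+l) = braidAgen n k (k+1+l) := if_pos (by omega)
    have hsub : k+1+l - 1 - k = l := by omega
    rw [hA, braidAgen_eq, hsub, conj_alt l k hk (by omega)]
    rw [chU_succ_back, chD_succ_back]
    rw [pow_two]; group

/-- `d_k` commutes with `σ_j` for `k+1 ≤ j ≤ k+l-1`. -/
lemma commute_sigma_dpr {n k l j : ℕ} (hk : 1 ≤ k) (hj1 : k + 1 ≤ j) (hj2 : j + 1 ≤ k + l)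
    (hn : k + l ≤ n) : Commute (braidSigma n j) (dpr n k l) := by
  rw [dpr_eq n l k hk hn]
  have h1 : braidSigma n j * chU n k l = chU n k l * braidSigma n (j-1) := by
    have := shift_chU (n := n) l (j-1) k hk (by omega) (by omega) hn
    rw [show j - 1 + 1 = j from by omega] at this
    exact this
  have h2 : braidSigma n (j-1) * chD n k l = chD n k l * braidSigma n j := by
    have := shift_chD (n := n) l (j-1) k hk (by omega) (by omega) hn
    rw [show j - 1 + 1 = j from by omega] at this
    exact this
  show braidSigma n j * _ = _ * braidSigma n j
  calc braidSigma n j * (chU n k l * chD n k l)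
      = (braidSigma n j * chU n k l) * chD n k l := by group
    _ = chU n k l * (braidSigma n (j-1) * chD n k l) := by rw [h1]; group
    _ = chU n k l * chD n k l * braidSigma n j := by rw [h2]; group

/-- commute with `t_j` from generator commutation on `σ_1,…,σ_{j-1}` -/
lemma commute_T {n : ℕ} {g : BraidGroup n} {j : ℕ} (hj : j ≤ n)
    (h : ∀ c, 1 ≤ c → c + 1 ≤ j → Commute g (braidSigma n c)) : Commute g (braidT n j) := by
  rcases Nat.eq_zero_or_pos j with rfl | hj1
  · show Commute g (braidT n 0)
    have : braidT n 0 = 1 := rfl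
    rw [this]; exact Commute.one_right g
  · rw [braidT_eq n j hj1]
    refine Commute.mul_right ?_ ?_
    · exact commute_chD g 1 (j-1) (fun m hm1 hm2 => h m hm1 (by omega))
    · exact commute_chU g 1 (j-1) (fun m hm1 hm2 => h m hm1 (by omega))

/-- commute with `dpr k l` from generator commutation on `σ_k,…,σ_{k+l-1}` -/
lemma commute_dpr {n : ℕ} {g : BraidGroup n} {k l : ℕ} (hk : 1 ≤ k) (hn : k + l ≤ n)
    (h : ∀ c, k ≤ c → c + 1 ≤ k + l → Commute g (braidSigma n c)) : Commute g (dpr n k l) := by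
  rw [dpr_eq n l k hk hn]
  refine Commute.mul_right ?_ ?_
  · exact commute_chU g k l (fun m hm1 hm2 => h m hm1 (by omega))
  · exact commute_chD g k l (fun m hm1 hm2 => h m hm1 (by omega))

/-- interchange of an interleaved product -/
lemma interchange {G : Type*} [Group G] (f g : ℕ → G) : ∀ (L a : ℕ),
    (∀ k m, a ≤ k → k < m → m < a + L → Commute (g k) (f m)) →
    ((List.range' a L).map (fun k => f k * g k)).prod
      = ((List.range' a L).map f).prod * ((List.range' a L).map g).prod := by
  intro L
  induction L with
  | zero => intro a _; simp
  | succ L ih =>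
    intro a hcomm
    rw [List.range'_succ]
    simp only [List.map_cons, List.prod_cons]
    rw [ih (a+1) (fun k m hk hkm hm => hcomm k m (by omega) hkm (by omega))]
    have hga : Commute (g a) (((List.range' (a+1) L).map f).prod) := by
      apply Commute.list_prod_right
      intro x hx
      obtain ⟨m, hm, rfl⟩ := List.mem_map.mp hx
      obtain ⟨h1, h2⟩ := List.mem_range'_1.mp hm
      exact hcomm a m le_rfl (by omega) (by omega)
    calc f a * g a * (((List.range' (a+1) L).map f).prod * ((List.range' (a+1) L).map g).prod)
        = f a * (g a * ((List.range' (a+1) L).map f).prod) * ((List.range' (a+1) L).map g).prod := by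
          group
      _ = f a * (((List.range' (a+1) L).map f).prod * g a) * ((List.range' (a+1) L).map g).prod := by
          rw [hga.eq]
      _ = f a * ((List.range' (a+1) L).map f).prod *
            (g a * ((List.range' (a+1) L).map g).prod) := by group

/-- the partial full twist `W_M = t_1 t_2 ⋯ t_M` -/
def WW (n M : ℕ) : BraidGroup n := ((List.range' 1 M).map (braidT n)).prod

lemma WW_succ (n M : ℕ) : WW n (M+1) = WW n M * braidT n (M+1) := by
  simp [WW, List.range'_concat, Nat.add_comm]

/-- the two expressions for the full twist:
`t_1 ⋯ t_M = (∏_{k=1}^{M-1} A_{k,k+1}⋯A_{k,M})` -/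
lemma two_expressions {n : ℕ} : ∀ M, M ≤ n →
    WW n M = ((List.range' 1 (M-1)).map (fun k => dpr n k (M-k))).prod := by
  intro M
  induction M with
  | zero => intro _; rfl
  | succ M ih =>
    intro hM
    rcases Nat.eq_zero_or_pos M with rfl | hM1
    · show WW n 1 = _
      have h1 : WW n 1 = braidT n 1 := by simp [WW]
      have h2 : braidT n 1 = 1 := rfl
      simp [h1, h2]
    -- step
    rw [WW_succ, ih (by omega)]
    have hsplit : List.range' 1 M = List.range' 1 (M-1) ++ [M] := by
      conv_lhs => rw [show M = (M-1)+1 from by omega, List.range'_concat]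
      rw [show 1 + 1*(M-1) = M from by omega]
    have hM1sub : (M+1) - 1 = M := rfl
    rw [hM1sub, hsplit]
    rw [List.map_append, List.prod_append]
    have hpt : ((List.range' 1 (M-1)).map (fun k => dpr n k (M+1-k))).prod
        = ((List.range' 1 (M-1)).map (fun k => dpr n k (M-k) * braidA n k (M+1))).prod := by
      apply congrArg
      apply List.map_congr_left
      intro k hk
      obtain ⟨hk1, hk2⟩ := List.mem_range'_1.mp hk
      have h1 : M + 1 - k = (M - k) + 1 := by omega
      rw [h1, dpr_succ]
      congr 2
      omega
    rw [hpt]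
    have hcomm : ∀ k m, 1 ≤ k → k < m → m < 1 + (M-1) →
        Commute (braidA n k (M+1)) (dpr n m (M-m)) := by
      intro k m hk hkm hm
      apply commute_dpr (by omega) (by omega)
      intro c hc1 hc2
      have hA : braidA n k (M+1) = braidAgen n k (M+1) := if_pos (by omega)
      rw [hA]
      exact (commute_sigma_Agen (by omega) (by omega) (by omega) (by omega)).symm
    rw [interchange _ _ _ _ hcomm]
    have hlast : ([M].map (fun k => dpr n k (M+1-k))).prod = braidA n M (M+1) := by
      have h1 : M + 1 - M = 1 := by omega
      simp [h1, dpr, List.range'_succ]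
    rw [hlast]
    have hT : braidT n (M+1) = ((List.range' 1 (M-1)).map (fun k => braidA n k (M+1))).prod *
        braidA n M (M+1) := by
      show ((List.range' 1 ((M+1)-1)).map (fun k => braidA n k (M+1))).prod = _
      rw [hM1sub, hsplit, List.map_append, List.prod_append]
      simp
    rw [hT]
    group

/-- pointwise identity: `Ã_{0,i} = d_i⁻¹ t_i` -/
lemma A0tilde_eq {n i : ℕ} (hi1 : 1 ≤ i) (hin : i ≤ n) :
    braidA0tilde n i = (dpr n i (n-i))⁻¹ * braidT n i := by
  obtain ⟨i', rfl⟩ : ∃ i', i = i' + 1 := ⟨i-1, by omega⟩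
  obtain ⟨m, rfl⟩ : ∃ m, n = (i'+1) + m := ⟨n - (i'+1), by omega⟩
  have s2 : (i'+1) + m - (i'+1) = m := by omega
  rw [s2]
  have hsplit : List.range' 1 ((i'+1)+m) = List.range' 1 i' ++ ((i'+1) :: List.range' (i'+2) m) := by
    have h2 : (i'+1) :: List.range' (i'+2) m = List.range' (i'+1) (m+1) := by
      rw [List.range'_succ]
    have h3 := List.range'_append (s := 1) (m := i') (n := m+1) (step := 1)
    rw [h2, show (i'+1)+m = i'+(m+1) from by omega, ← h3,
      show 1+1*i' = i'+1 from by omega]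
  have hA0 : braidA0 ((i'+1)+m) (i'+1)
      = (braidT ((i'+1)+m) (i'+1) * dpr ((i'+1)+m) (i'+1) m)⁻¹ := by
    unfold braidA0
    congr 1
    rw [hsplit, List.map_append, List.prod_append, List.map_cons, List.prod_cons]
    have hii : braidA ((i'+1)+m) (i'+1) (i'+1) = 1 := by simp [braidA]
    rw [hii, one_mul]
    have hT : braidT ((i'+1)+m) (i'+1)
        = ((List.range' 1 i').map (fun k => braidA ((i'+1)+m) k (i'+1))).prod := by
      unfold braidT
      congr 1
    rw [hT]
    congr 1
    unfold dpr
    rw [show i' + 1 + 1 = i' + 2 from rfl]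
    apply congrArg
    apply List.map_congr_left
    intro k hk
    obtain ⟨hk1, hk2⟩ := List.mem_range'_1.mp hk
    show braidA _ k (i'+1) = braidA _ (i'+1) k
    unfold braidA
    rw [if_neg (by omega), if_pos (by omega), if_pos (by omega)]
  unfold braidA0tilde
  rw [hA0, pow_two]
  group

/-- tail of the full-twist expression, `Z_k = d_k d_{k+1} ⋯ d_{n-1}` -/
def Ztl (n k : ℕ) : BraidGroup n := ((List.range' k (n-k)).map (fun i => dpr n i (n-i))).prod

lemma Ztl_top (n : ℕ) : Ztl n (n+1) = 1 := by
  unfold Ztl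
  rw [show n - (n+1) = 0 from by omega]
  rfl

lemma Ztl_succ {n k : ℕ} (hk : k ≤ n) :
    Ztl n k = dpr n k (n-k) * Ztl n (k+1) := by
  by_cases hk' : k + 1 ≤ n
  · unfold Ztl
    conv_lhs => rw [show n - k = (n-(k+1))+1 from by omega, List.range'_succ]
    simp
  · have hkn : k = n := by omega
    subst hkn
    have h1 : Ztl k k = 1 := by
      unfold Ztl
      rw [show k - k = 0 from by omega]
      rfl
    have h2 : dpr k k (k-k) = 1 := by
      rw [show k - k = 0 from by omega]
      rfl
    rw [h1, h2, Ztl_top, one_mul]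

lemma commute_T_dpr {n j i : ℕ} (hji : j + 1 ≤ i) (hi1 : 1 ≤ i) (hin : i ≤ n) (hjn : j ≤ n) :
    Commute (braidT n j) (dpr n i (n-i)) := by
  refine (commute_T hjn ?_).symm
  intro c hc1 hc2
  refine (commute_dpr hi1 (by omega) ?_).symm
  intro c' hc1' hc2'
  exact braid_comm hc1 (by omega)

lemma commute_dpr_dpr {n k i : ℕ} (hk : 1 ≤ k) (hki : k + 1 ≤ i) (hin : i ≤ n) :
    Commute (dpr n k (n-k)) (dpr n i (n-i)) := by
  apply commute_dpr (by omega) (by omega)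
  intro c hc1 hc2
  exact (commute_sigma_dpr hk (by omega) (by omega) (by omega)).symm

lemma commute_WW_Ztl {n a b : ℕ} (hab : a + 1 ≤ b) : Commute (WW n a) (Ztl n b) := by
  apply Commute.list_prod_right
  intro x hx
  obtain ⟨i, hi, rfl⟩ := List.mem_map.mp hx
  obtain ⟨hi1, hi2⟩ := List.mem_range'_1.mp hi
  apply Commute.list_prod_left
  intro y hy
  obtain ⟨j, hj, rfl⟩ := List.mem_map.mp hy
  obtain ⟨hj1, hj2⟩ := List.mem_range'_1.mp hj
  exact commute_T_dpr (by omega) (by omega) (by omega) (by omega)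

lemma commute_dprk_Ztl {n k : ℕ} (hk : 1 ≤ k) : Commute (dpr n k (n-k)) (Ztl n (k+1)) := by
  apply Commute.list_prod_right
  intro x hx
  obtain ⟨i, hi, rfl⟩ := List.mem_map.mp hx
  obtain ⟨hi1, hi2⟩ := List.mem_range'_1.mp hi
  exact commute_dpr_dpr hk (by omega) (by omega)

lemma tele_step {G : Type*} [Group G] {d t Z' W' W1 Wn Z : G}
    (ht : t = W'⁻¹ * W1) (hZ : Z = d * Z')
    (c1 : Commute W1 Z') (c2 : Commute W' Z') (c3 : Commute d Z') :
    d⁻¹ * t * (Z'⁻¹ * W1⁻¹ * Wn) = Z⁻¹ * W'⁻¹ * Wn := by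
  subst ht hZ
  have e1 : W1 * Z'⁻¹ = Z'⁻¹ * W1 := c1.inv_right.eq
  have e2 : W'⁻¹ * Z'⁻¹ = Z'⁻¹ * W'⁻¹ := (c2.inv_inv).eq
  have e3 : d⁻¹ * Z'⁻¹ = Z'⁻¹ * d⁻¹ := (c3.inv_inv).eq
  calc d⁻¹ * (W'⁻¹ * W1) * (Z'⁻¹ * W1⁻¹ * Wn)
      = d⁻¹ * W'⁻¹ * (W1 * Z'⁻¹) * W1⁻¹ * Wn := by group
    _ = d⁻¹ * (W'⁻¹ * Z'⁻¹) * Wn := by rw [e1]; group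
    _ = (d⁻¹ * Z'⁻¹) * W'⁻¹ * Wn := by rw [e2]; group
    _ = Z'⁻¹ * d⁻¹ * W'⁻¹ * Wn := by rw [e3]
    _ = (d * Z')⁻¹ * W'⁻¹ * Wn := by group

/-- the telescoping computation -/
lemma tele {n : ℕ} : ∀ l, l ≤ n →
    ((List.range' (n+1-l) l).map (braidA0tilde n)).prod
      = (Ztl n (n+1-l))⁻¹ * (WW n (n-l))⁻¹ * WW n n := by
  intro l
  induction l with
  | zero =>
    intro _
    rw [show n + 1 - 0 = n + 1 from rfl, Ztl_top, show n - 0 = n from rfl]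
    simp
  | succ l ih =>
    intro hl
    have hk1 : 1 ≤ n - l := by omega
    have e0 : n + 1 - (l+1) = n - l := by omega
    have e1 : (n - l) + 1 = n + 1 - l := by omega
    have e2 : n - (l+1) = (n - l) - 1 := by omega
    rw [e0, e2]
    have ihh := ih (by omega)
    rw [List.range'_succ, e1, List.map_cons, List.prod_cons, ihh, ← e1]
    rw [A0tilde_eq hk1 (by omega)]
    rw [mul_assoc ((dpr n (n-l) (n-(n-l)))⁻¹) (braidT n (n-l)) _]
    rw [← mul_assoc]
    apply tele_step
    · have := WW_succ n ((n-l)-1)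
      rw [show (n-l) - 1 + 1 = n - l from by omega] at this
      rw [this]; group
    · exact Ztl_succ (show (n-l) ≤ n from by omega)
    · exact commute_WW_Ztl (by omega)
    · exact commute_WW_Ztl (by omega)
    · exact commute_dprk_Ztl (n := n) hk1

end BraidAux
/-- In `P_n`, with `t_i := A_{1,i} ⋯ A_{i-1,i}`, `A_{0,i} := (A_{1,i} ⋯ A_{n,i})⁻¹`
and `Ã_{0,i} := A_{0,i} t_i²`, the product `Ã_{0,1} Ã_{0,2} ⋯ Ã_{0,n}` is trivial. -/
theorem prod_A0tilde_eq_one (n : ℕ) :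
    ((List.range' 1 n).map (braidA0tilde n)).prod = 1 := by
  have h := BraidAux.tele (n := n) n le_rfl
  rw [show n + 1 - n = 1 from by omega, show n - n = 0 from by omega] at h
  rw [h]
  have hW0 : BraidAux.WW n 0 = 1 := rfl
  have h3 : BraidAux.Ztl n 1 = BraidAux.WW n n := by
    rw [BraidAux.two_expressions (n := n) n le_rfl]
    rfl
  rw [hW0, h3]
  group
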